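/- Let q be a positive integer, p a prime, e a positive integer, and r a reduced residue modulo q; for each Dirichlet character χ mod q let χ* denote the primitive character inducing χ. If p ∤ q, then Σ_{χ mod q} χ(r)·( χ*(p^e) − χ(p^e) ) = 0. If p | q and ν ≥ 1 is the integer with p^ν ∥ q, then Σ_{χ mod q} χ(r)·( χ*(p^e) − χ(p^e) ) equals φ(q/p^ν) if r·p^e ≡ 1 (mod q/p^ν), and equals 0 otherwise. -/

import Mathlib

open DirichletCharacter Complex

attribute [local instance] Classical.propDecidable

noncomputable section

lemma aux_factorsThrough_gcd {q : ℕ} [NeZero q] (χ : DirichletCharacter ℂ q) {d₁ d₂ : ℕ}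
    (h₁ : χ.FactorsThrough d₁) (h₂ : χ.FactorsThrough d₂) :
    χ.FactorsThrough (Nat.gcd d₁ d₂) := by
  have hd₁ : d₁ ∣ q := h₁.dvd
  have hd₂ : d₂ ∣ q := h₂.dvd
  have hd₁0 : NeZero d₁ := ⟨fun h => (NeZero.ne q) (Nat.eq_zero_of_zero_dvd (h ▸ hd₁))⟩
  have hd₂0 : NeZero d₂ := ⟨fun h => (NeZero.ne q) (Nat.eq_zero_of_zero_dvd (h ▸ hd₂))⟩
  have hg : Nat.gcd d₁ d₂ ∣ q := (Nat.gcd_dvd_left d₁ d₂).trans hd₁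
  have hL : Nat.lcm d₁ d₂ ∣ q := Nat.lcm_dvd hd₁ hd₂
  rw [factorsThrough_iff_ker_unitsMap hg]
  rw [factorsThrough_iff_ker_unitsMap hd₁] at h₁
  rw [factorsThrough_iff_ker_unitsMap hd₂] at h₂
  intro u hu
  set a := (u : ZMod q).val with ha
  have hau : (a : ZMod q) = (u : ZMod q) := by rw [ZMod.natCast_val, ZMod.cast_id]
  have hamod : a ≡ 1 [MOD Nat.gcd d₁ d₂] := by
    have h1 : ((a : ℕ) : ZMod (Nat.gcd d₁ d₂)) = ((1 : ℕ) : ZMod (Nat.gcd d₁ d₂)) := by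
      have := congrArg (Units.val) hu
      rw [ZMod.unitsMap_def] at this
      simp only [Units.coe_map, MonoidHom.coe_coe, Units.val_one] at this
      rw [← hau] at this
      simpa using this
    exact (ZMod.natCast_eq_natCast_iff _ _ _).mp h1
  obtain ⟨k, hk₁, hk₂⟩ := Nat.chineseRemainder' hamod
  have hka : (k : ZMod d₁) = (a : ZMod d₁) := (ZMod.natCast_eq_natCast_iff _ _ _).mpr hk₁
  have hk1 : (k : ZMod d₂) = 1 := by
    have := (ZMod.natCast_eq_natCast_iff _ _ _).mpr hk₂; simpa using this
  have had₁ : (a : ZMod d₁) = ZMod.castHom hd₁ (ZMod d₁) (u : ZMod q) := by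
    rw [← hau]; simp
  have hunit₁ : IsUnit (k : ZMod d₁) := by
    rw [hka, had₁]
    exact (Units.isUnit (ZMod.unitsMap hd₁ u))
  have hcop₁ : k.Coprime d₁ := (ZMod.isUnit_iff_coprime k d₁).mp hunit₁
  have hcop₂ : k.Coprime d₂ := (ZMod.isUnit_iff_coprime k d₂).mp (hk1 ▸ isUnit_one)
  have hcopL : k.Coprime (Nat.lcm d₁ d₂) :=
    Nat.Coprime.coprime_dvd_right (Nat.lcm_dvd (dvd_mul_right d₁ d₂) (dvd_mul_left d₂ d₁))
      (hcop₁.mul_right hcop₂)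
  have hLne : NeZero (Nat.lcm d₁ d₂) := ⟨fun h => (NeZero.ne q) (Nat.eq_zero_of_zero_dvd (h ▸ hL))⟩
  have hunitL : IsUnit (k : ZMod (Nat.lcm d₁ d₂)) := (ZMod.isUnit_iff_coprime k _).mpr hcopL
  obtain ⟨w', hw'⟩ := ZMod.unitsMap_surjective hL hunitL.unit
  have hw'd : ∀ (d : ℕ) (hd : d ∣ Nat.lcm d₁ d₂) (hdq : d ∣ q),
      ((ZMod.unitsMap hdq w' : ZMod d)) = (k : ZMod d) := by
    intro d hd hdq
    have : ZMod.unitsMap hdq w' = ZMod.unitsMap hd (ZMod.unitsMap hL w') := by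
      rw [← MonoidHom.comp_apply, ZMod.unitsMap_comp]
    rw [this, hw']
    simp [ZMod.unitsMap_def]
  have hker₂ : w' ∈ (ZMod.unitsMap hd₂).ker := by
    rw [MonoidHom.mem_ker]
    ext
    rw [hw'd d₂ (Nat.dvd_lcm_right _ _) hd₂, hk1, Units.val_one]
  have hker₁ : u * w'⁻¹ ∈ (ZMod.unitsMap hd₁).ker := by
    rw [MonoidHom.mem_ker, map_mul, map_inv]
    have : ZMod.unitsMap hd₁ w' = ZMod.unitsMap hd₁ u := by
      ext
      rw [hw'd d₁ (Nat.dvd_lcm_left _ _) hd₁, hka, had₁]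
      simp [ZMod.unitsMap_def]
    rw [this, mul_inv_cancel]
  have hu' : u = (u * w'⁻¹) * w' := by group
  rw [MonoidHom.mem_ker, hu', map_mul, h₁ hker₁, h₂ hker₂, one_mul]

lemma aux_eq_changeLevel_prim {q : ℕ} (χ : DirichletCharacter ℂ q) :
    χ = changeLevel (conductor_dvd_level χ) χ.primitiveCharacter :=
  Classical.choose_spec (factorsThrough_conductor χ).choose_spec

lemma aux_conductor_dvd {q : ℕ} [NeZero q] (χ : DirichletCharacter ℂ q) {d : ℕ}
    (h : χ.FactorsThrough d) : χ.conductor ∣ d := by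
  have hg' := aux_factorsThrough_gcd χ (factorsThrough_conductor χ) h
  have h1 : χ.conductor ≤ Nat.gcd χ.conductor d := Nat.sInf_le hg'
  have hc0 : χ.conductor ≠ 0 := conductor_ne_zero χ
  have h2 : Nat.gcd χ.conductor d ≤ χ.conductor :=
    Nat.le_of_dvd (Nat.pos_of_ne_zero hc0) (Nat.gcd_dvd_left _ _)
  have hge : Nat.gcd χ.conductor d = χ.conductor := le_antisymm h2 h1
  exact hge ▸ Nat.gcd_dvd_right _ _

lemma aux_prim_apply_unit {q : ℕ} (χ : DirichletCharacter ℂ q) (a : (ZMod q)ˣ) :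
    χ a = χ.primitiveCharacter (ZMod.cast (a : ZMod q)) := by
  conv_lhs => rw [aux_eq_changeLevel_prim χ]
  exact changeLevel_eq_cast_of_dvd _ _ a

lemma aux_cast_pow {q m : ℕ} (hm : m ∣ q) (p e : ℕ) :
    (ZMod.cast ((p : ZMod q) ^ e) : ZMod m) = (p : ZMod m) ^ e := by
  rw [show (ZMod.cast ((p : ZMod q) ^ e) : ZMod m)
        = ZMod.castHom hm (ZMod m) ((p : ZMod q) ^ e) from (ZMod.castHom_apply _).symm,
    map_pow, map_natCast]

theorem semi_orthogonality (q : ℕ) [NeZero q] (p : ℕ) (hp : p.Prime) (e : ℕ) (he : 1 ≤ e)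
    (r : ZMod q) (hr : IsUnit r) :
    (¬ p ∣ q →
      (∑ χ : DirichletCharacter ℂ q,
        χ r * (χ.primitiveCharacter ((p : ZMod χ.conductor) ^ e) - χ ((p : ZMod q) ^ e))) = 0) ∧
    (p ∣ q →
      (∑ χ : DirichletCharacter ℂ q,
        χ r * (χ.primitiveCharacter ((p : ZMod χ.conductor) ^ e) - χ ((p : ZMod q) ^ e))) =
      if ZMod.castHom (Nat.div_dvd_of_dvd (Nat.ordProj_dvd q p))
            (ZMod (q / p ^ (q.factorization p))) r * (p : ZMod (q / p ^ (q.factorization p))) ^ e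
          = 1
      then ((q / p ^ (q.factorization p)).totient : ℂ) else 0) := by
  have hq : q ≠ 0 := NeZero.ne q
  have he0 : e ≠ 0 := Nat.one_le_iff_ne_zero.mp he
  constructor
  · -- case p ∤ q
    intro hpq
    refine Finset.sum_eq_zero fun χ _ => ?_
    have hu : IsUnit ((p : ZMod q) ^ e) :=
      IsUnit.pow e ((ZMod.isUnit_iff_coprime p q).mpr ((Nat.Prime.coprime_iff_not_dvd hp).mpr hpq))
    have h1 : χ ((p : ZMod q) ^ e) = χ.primitiveCharacter ((p : ZMod χ.conductor) ^ e) := by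
      rw [show ((p : ZMod q) ^ e) = ((hu.unit : (ZMod q)ˣ) : ZMod q) from (hu.unit_spec).symm,
        aux_prim_apply_unit χ hu.unit, hu.unit_spec, aux_cast_pow (conductor_dvd_level χ)]
    rw [h1, sub_self, mul_zero]
  · -- case p ∣ q
    intro hpq
    set Q := q / p ^ (q.factorization p) with hQdef
    have hQq : Q ∣ q := Nat.div_dvd_of_dvd (Nat.ordProj_dvd q p)
    have hpQ : ¬ p ∣ Q := Nat.not_dvd_ordCompl hp hq
    have hQ0 : NeZero Q := ⟨(Nat.ordCompl_pos p hq).ne'⟩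
    -- χ (p^e) = 0 for all χ
    have hzero : ∀ χ : DirichletCharacter ℂ q, χ ((p : ZMod q) ^ e) = 0 := by
      intro χ
      apply MulChar.map_nonunit
      intro hu
      have : IsUnit (p : ZMod q) := (isUnit_pow_iff he0).mp hu
      exact (hp.coprime_iff_not_dvd.mp ((ZMod.isUnit_iff_coprime p q).mp this)) hpq
    simp only [hzero, sub_zero]
    have hQunit : IsUnit ((p : ZMod Q) ^ e) :=
      IsUnit.pow e ((ZMod.isUnit_iff_coprime p Q).mpr (hp.coprime_iff_not_dvd.mpr hpQ))
    rw [← Finset.sum_filter_add_sum_filter_not Finset.univ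
        (fun χ : DirichletCharacter ℂ q => χ.conductor ∣ Q)]
    have hkill : ∀ χ ∈ Finset.univ.filter
        (fun χ : DirichletCharacter ℂ q => ¬ χ.conductor ∣ Q),
        χ r * χ.primitiveCharacter ((p : ZMod χ.conductor) ^ e) = 0 := by
      intro χ hχ
      have hχ' : ¬ χ.conductor ∣ Q := (Finset.mem_filter.mp hχ).2
      have hpc : p ∣ χ.conductor := by
        by_contra hpc
        have hcop : (χ.conductor).Coprime (p ^ q.factorization p) :=
          Nat.Coprime.pow_right _ ((Nat.coprime_comm).mp (hp.coprime_iff_not_dvd.mpr hpc))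
        have hdvd : χ.conductor ∣ p ^ q.factorization p * Q := by
          rw [Nat.ordProj_mul_ordCompl_eq_self q p]
          exact conductor_dvd_level χ
        exact hχ' (hcop.dvd_of_dvd_mul_left hdvd)
      have hprim0 : χ.primitiveCharacter ((p : ZMod χ.conductor) ^ e) = 0 := by
        apply MulChar.map_nonunit
        intro hu
        have hc0 : NeZero χ.conductor := ⟨conductor_ne_zero χ⟩
        have : IsUnit (p : ZMod χ.conductor) := (isUnit_pow_iff he0).mp hu
        exact (hp.coprime_iff_not_dvd.mp ((ZMod.isUnit_iff_coprime p χ.conductor).mp this)) hpc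
      rw [hprim0, mul_zero]
    rw [Finset.sum_eq_zero hkill, add_zero]
    have key : (∑ χ ∈ Finset.univ.filter
          (fun χ : DirichletCharacter ℂ q => χ.conductor ∣ Q),
          χ r * χ.primitiveCharacter ((p : ZMod χ.conductor) ^ e))
        = ∑ ψ : DirichletCharacter ℂ Q,
            ψ (ZMod.castHom hQq (ZMod Q) r * (p : ZMod Q) ^ e) := by
      refine Finset.sum_bij'
        (fun χ hχ => changeLevel (Finset.mem_filter.mp hχ).2 χ.primitiveCharacter)
        (fun ψ _ => changeLevel hQq ψ)
        (fun _ _ => Finset.mem_univ _) ?_ ?_ ?_ ?_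
      · intro ψ _
        exact Finset.mem_filter.mpr ⟨Finset.mem_univ _,
          aux_conductor_dvd _ (changeLevel_factorsThrough _ hQq)⟩
      · intro χ hχ
        rw [← changeLevel_trans _ (Finset.mem_filter.mp hχ).2 hQq]
        exact (aux_eq_changeLevel_prim χ).symm
      · intro ψ _
        apply changeLevel_injective hQq
        rw [← changeLevel_trans _ _ hQq]
        exact (aux_eq_changeLevel_prim (changeLevel hQq ψ)).symm
      · intro χ hχ
        have hc : χ.conductor ∣ Q := (Finset.mem_filter.mp hχ).2
        have hχψ : χ = changeLevel hQq (changeLevel hc χ.primitiveCharacter) := by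
          rw [← changeLevel_trans _ hc hQq]
          exact aux_eq_changeLevel_prim χ
        have h1 : χ r = changeLevel hc χ.primitiveCharacter (ZMod.castHom hQq (ZMod Q) r) := by
          conv_lhs => rw [show r = ((hr.unit : (ZMod q)ˣ) : ZMod q) from hr.unit_spec.symm,
            hχψ, changeLevel_eq_cast_of_dvd]
          rw [ZMod.castHom_apply, hr.unit_spec]
        have h2 : χ.primitiveCharacter ((p : ZMod χ.conductor) ^ e)
            = changeLevel hc χ.primitiveCharacter ((p : ZMod Q) ^ e) := by
          conv_rhs => rw [show ((p : ZMod Q) ^ e) = ((hQunit.unit : (ZMod Q)ˣ) : ZMod Q) from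
            hQunit.unit_spec.symm, changeLevel_eq_cast_of_dvd]
          rw [hQunit.unit_spec, aux_cast_pow hc]
        rw [h1, h2, ← map_mul]
    rw [key, DirichletCharacter.sum_characters_eq]
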